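/- Let each f_i have L_i-Lipschitz gradient and let x_{k+1} = x_k − s_k proj_{C_α(x_k)}(0) with C_α(x_k) = conv{∇f_i(x_k)/α_i(x_k,k)}, α_i(x_k,k) ≥ α_min > 0, and step sizes 0 < s_min ≤ s_k ≤ min_i 2α_i(x_k,k)/L_i. Then f_i(x_{k+1}) ≤ f_i(x_k) for all i and k; more precisely f_i(x_{k+1}) − f_i(x_k) ≤ (α_i(x_k,k)/(2s_k))(L_i s_k/α_i(x_k,k) − 2)‖x_{k+1}−x_k‖² ≤ 0. -/

import Mathlib

noncomputable section
open Metric Set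

open RealInnerProductSpace in
/-- Descent lemma: an everywhere-differentiable function with `L`-Lipschitz gradient
satisfies the quadratic upper bound. -/
lemma descent_lemma {E : Type*} [NormedAddCommGroup E] [InnerProductSpace ℝ E] [CompleteSpace E]
    (f : E → ℝ) (g : E → E) (hg : ∀ u, HasGradientAt f (g u) u)
    (L : ℝ) (hL0 : 0 ≤ L) (hL : ∀ u v, ‖g u - g v‖ ≤ L * ‖u - v‖) (x y : E) :
    f y ≤ f x + ⟪g x, y - x⟫ + L / 2 * ‖y - x‖ ^ 2 := by
  set Δ := y - x with hΔ
  set h : ℝ → ℝ := fun t => f (x + t • Δ) - t * ⟪g x, Δ⟫ - L / 2 * t ^ 2 * ‖Δ‖ ^ 2 with hh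
  have hderiv : ∀ t : ℝ, HasDerivAt h
      (⟪g (x + t • Δ), Δ⟫ - ⟪g x, Δ⟫ - L * t * ‖Δ‖ ^ 2) t := by
    intro t
    have hline : HasDerivAt (fun t : ℝ => x + t • Δ) Δ t := by
      simpa using ((hasDerivAt_id t).smul_const Δ).const_add x
    have h1 : HasDerivAt (fun t : ℝ => f (x + t • Δ)) ⟪g (x + t • Δ), Δ⟫ t := by
      have := (hg (x + t • Δ)).hasFDerivAt.comp_hasDerivAt t hline
      simp at this
      exact this
    have h2 : HasDerivAt (fun t : ℝ => t * ⟪g x, Δ⟫) ⟪g x, Δ⟫ t := by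
      simpa using (hasDerivAt_id t).mul_const ⟪g x, Δ⟫
    have h3 : HasDerivAt (fun t : ℝ => L / 2 * t ^ 2 * ‖Δ‖ ^ 2)
        (L * t * ‖Δ‖ ^ 2) t := by
      have := (((hasDerivAt_pow 2 t).const_mul (L / 2)).mul_const (‖Δ‖ ^ 2))
      exact this.congr_deriv (by ring)
    exact (h1.sub h2).sub h3
  have hanti : AntitoneOn h (Icc (0 : ℝ) 1) := by
    apply antitoneOn_of_deriv_nonpos (convex_Icc 0 1)
    · exact Continuous.continuousOn (by
        have hdf : Differentiable ℝ f := fun u => (hg u).differentiableAt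
        have hfc : Continuous f := hdf.continuous
        fun_prop)
    · intro t _
      exact (hderiv t).differentiableAt.differentiableWithinAt
    · intro t ht
      rw [interior_Icc] at ht
      rw [(hderiv t).deriv]
      have hbound : ⟪g (x + t • Δ) - g x, Δ⟫ ≤ L * t * ‖Δ‖ ^ 2 := by
        calc ⟪g (x + t • Δ) - g x, Δ⟫ ≤ ‖g (x + t • Δ) - g x‖ * ‖Δ‖ :=
              real_inner_le_norm _ _
          _ ≤ (L * ‖(x + t • Δ) - x‖) * ‖Δ‖ := by
              gcongr; exact hL _ _
          _ = L * t * ‖Δ‖ ^ 2 := by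
              rw [add_sub_cancel_left, norm_smul, Real.norm_eq_abs,
                abs_of_pos ht.1]
              ring
      have : ⟪g (x + t • Δ), Δ⟫ - ⟪g x, Δ⟫ = ⟪g (x + t • Δ) - g x, Δ⟫ := by
        rw [inner_sub_left]
      linarith [hbound, this]
  have h10 : h 1 ≤ h 0 := hanti (by norm_num) (by norm_num) zero_le_one
  simp only [hh, one_smul, zero_smul, add_zero, one_pow, zero_pow, one_mul] at h10
  have hy : x + Δ = y := by rw [hΔ]; abel
  rw [hy] at h10
  nlinarith [h10]

open RealInnerProductSpace in
/-- Variational inequality for the minimum-norm element of a convex set. -/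
lemma min_norm_inner {E : Type*} [NormedAddCommGroup E] [InnerProductSpace ℝ E]
    {C : Set E} (hC : Convex ℝ C) {p : E} (hpC : p ∈ C)
    (hmin : ∀ y ∈ C, ‖p‖ ≤ ‖y‖) {y : E} (hy : y ∈ C) :
    ‖p‖ ^ 2 ≤ ⟪p, y⟫ := by
  have key : (0 : ℝ) ≤ ⟪p, y - p⟫ := by
    by_contra hneg
    push_neg at hneg
    set c := ‖y - p‖ ^ 2 with hc
    have hc0 : 0 ≤ c := sq_nonneg _
    set t : ℝ := min 1 (-⟪p, y - p⟫ / (c + 1)) with ht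
    have htpos : 0 < t := lt_min one_pos (div_pos (by linarith) (by positivity))
    have ht1 : t ≤ 1 := min_le_left _ _
    have hmem : p + t • (y - p) ∈ C := by
      have := hC hpC hy (by linarith : (0:ℝ) ≤ 1 - t) htpos.le (by ring)
      convert this using 1
      module
    have hle := hmin _ hmem
    have hsq : ‖p‖ ^ 2 ≤ ‖p + t • (y - p)‖ ^ 2 := by
      have := pow_le_pow_left₀ (norm_nonneg p) hle 2
      exact this
    have hexpand : ‖p + t • (y - p)‖ ^ 2
        = ‖p‖ ^ 2 + 2 * t * ⟪p, y - p⟫ + t ^ 2 * c := by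
      rw [hc, norm_add_sq_real, norm_smul, real_inner_smul_right,
        Real.norm_eq_abs, abs_of_pos htpos, mul_pow]
      ring
    have h1 : 0 ≤ 2 * ⟪p, y - p⟫ + t * c := by
      have : 0 ≤ t * (2 * ⟪p, y - p⟫ + t * c) := by nlinarith [hsq, hexpand]
      nlinarith [htpos, this]
    have htc : t * c ≤ -⟪p, y - p⟫ := by
      have h2 : t ≤ -⟪p, y - p⟫ / (c + 1) := min_le_right _ _
      have h3 : t * (c + 1) ≤ -⟪p, y - p⟫ := by
        rw [← le_div_iff₀ (by positivity)]
        exact h2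
      nlinarith [htpos]
    nlinarith [h1, htc, hneg]
  have : ⟪p, y - p⟫ = ⟪p, y⟫ - ‖p‖ ^ 2 := by
    rw [inner_sub_right, real_inner_self_eq_norm_sq]
  linarith [key, this]

open RealInnerProductSpace in
/-- per-step descent of the discrete balanced gradient scheme. -/
theorem discrete_descent {n m : ℕ} [NeZero m]
    (f : Fin m → EuclideanSpace ℝ (Fin n) → ℝ)
    (g : Fin m → EuclideanSpace ℝ (Fin n) → EuclideanSpace ℝ (Fin n))
    (hg : ∀ i u, HasGradientAt (f i) (g i u) u)
    (L : Fin m → ℝ) (hLpos : ∀ i, 0 < L i)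
    (hL : ∀ i u v, ‖g i u - g i v‖ ≤ L i * ‖u - v‖)
    (αmin : ℝ) (hαmin : 0 < αmin)
    (α : ℕ → Fin m → ℝ) (hα : ∀ k i, αmin ≤ α k i)
    (smin : ℝ) (s : ℕ → ℝ)
    (hs : ∀ k, 0 < smin ∧ smin ≤ s k ∧
      s k ≤ Finset.univ.inf' Finset.univ_nonempty (fun i => 2 * α k i / L i))
    (x : ℕ → EuclideanSpace ℝ (Fin n))
    (p : ℕ → EuclideanSpace ℝ (Fin n))
    (hp : ∀ k,
      p k ∈ convexHull ℝ (Set.range fun i => (α k i)⁻¹ • g i (x k)) ∧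
      ∀ y ∈ convexHull ℝ (Set.range fun i => (α k i)⁻¹ • g i (x k)), ‖p k‖ ≤ ‖y‖)
    (hiter : ∀ k, x (k + 1) = x k - s k • p k) :
    ∀ k i,
      f i (x (k + 1)) - f i (x k) ≤
        α k i / (2 * s k) * (L i * s k / α k i - 2) * ‖x (k + 1) - x k‖ ^ 2 ∧
      α k i / (2 * s k) * (L i * s k / α k i - 2) * ‖x (k + 1) - x k‖ ^ 2 ≤ 0 := by
  intro k i
  obtain ⟨hsmin, hsk, hsinf⟩ := hs k
  have hskpos : 0 < s k := lt_of_lt_of_le hsmin hsk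
  have hαpos : 0 < α k i := lt_of_lt_of_le hαmin (hα k i)
  have hsle : s k ≤ 2 * α k i / L i :=
    le_trans hsinf (Finset.inf'_le _ (Finset.mem_univ i))
  -- the increment
  set Δ := x (k + 1) - x k with hΔdef
  have hΔ : Δ = -(s k • p k) := by rw [hΔdef, hiter k]; abel
  have hnormΔ : ‖Δ‖ ^ 2 = s k ^ 2 * ‖p k‖ ^ 2 := by
    rw [hΔ, norm_neg, norm_smul, Real.norm_eq_abs, abs_of_pos hskpos, mul_pow]
  -- variational inequality for the projection
  have hmem : (α k i)⁻¹ • g i (x k) ∈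
      convexHull ℝ (Set.range fun j => (α k j)⁻¹ • g j (x k)) :=
    subset_convexHull ℝ _ ⟨i, rfl⟩
  have hvar : ‖p k‖ ^ 2 ≤ ⟪p k, (α k i)⁻¹ • g i (x k)⟫ :=
    min_norm_inner (convex_convexHull ℝ _) (hp k).1 (hp k).2 hmem
  have hinner : α k i * ‖p k‖ ^ 2 ≤ ⟪g i (x k), p k⟫ := by
    have : ⟪p k, (α k i)⁻¹ • g i (x k)⟫ = (α k i)⁻¹ * ⟪g i (x k), p k⟫ := by
      rw [real_inner_smul_right, real_inner_comm]
    rw [this] at hvar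
    calc α k i * ‖p k‖ ^ 2 ≤ α k i * ((α k i)⁻¹ * ⟪g i (x k), p k⟫) := by
          gcongr
      _ = ⟪g i (x k), p k⟫ := by field_simp
  -- descent lemma
  have hdesc : f i (x (k + 1)) ≤ f i (x k) + ⟪g i (x k), Δ⟫ + L i / 2 * ‖Δ‖ ^ 2 := by
    have := descent_lemma (f i) (g i) (hg i) (L i) (hLpos i).le (hL i)
      (x k) (x (k + 1))
    simpa [← hΔdef] using this
  have hip : ⟪g i (x k), Δ⟫ ≤ -(α k i / s k) * ‖Δ‖ ^ 2 := by
    have : ⟪g i (x k), Δ⟫ = -(s k * ⟪g i (x k), p k⟫) := by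
      rw [hΔ, inner_neg_right, real_inner_smul_right]
    rw [this, hnormΔ]
    have h1 : s k * (α k i * ‖p k‖ ^ 2) ≤ s k * ⟪g i (x k), p k⟫ := by
      gcongr
    have heq : -(α k i / s k) * (s k ^ 2 * ‖p k‖ ^ 2)
        = -(s k * (α k i * ‖p k‖ ^ 2)) := by
      field_simp
    rw [heq]
    linarith
  have hcoef : α k i / (2 * s k) * (L i * s k / α k i - 2)
      = L i / 2 - α k i / s k := by
    field_simp
  constructor
  · rw [hcoef]
    nlinarith [hdesc, hip]
  · rw [hcoef]
    have h1 : L i / 2 - α k i / s k ≤ 0 := by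
      have h2 : s k * L i ≤ 2 * α k i := (le_div_iff₀ (hLpos i)).mp hsle
      rw [sub_nonpos, div_le_div_iff₀ (by norm_num) hskpos]
      nlinarith [h2]
    nlinarith [sq_nonneg ‖Δ‖, h1]
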